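/- Let Ω ⊆ ℝ^n be a nonempty closed convex set whose Euclidean projection Π_Ω is directionally differentiable at every point in every direction, i.e., Π'_Ω(x;h) := lim_{t↓0} (Π_Ω(x+th) − Π_Ω(x))/t exists for all x,h ∈ ℝ^n. Fix x̄ ∈ Ω. Then the projection derivation condition (PDC) holds at x̄ — meaning Π'_Ω(x̄+y;h) = Π_{K(x̄,y)}(h) for all y ∈ N_Ω(x̄) and all h ∈ ℝ^n, where K(x̄,y) := T_Ω(x̄) ∩ {y}^⊥ — if and only if (DN_Ω)(x̄,ȳ)(v) = N_{K(x̄,ȳ)}(v) for all ȳ ∈ N_Ω(x̄) and all v ∈ ℝ^n. -/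

import Mathlib

open scoped RealInnerProductSpace Pointwise
open Filter Topology Metric Set Classical

noncomputable section

abbrev Em (m : ℕ) := WithLp 2 (ℝ × EuclideanSpace ℝ (Fin m))

namespace SOC

def mk2 {α β : Type*} (a : α) (b : β) : WithLp 2 (α × β) := (WithLp.equiv 2 (α × β)).symm (a, b)

def Q (m : ℕ) : Set (Em m) := {s | ‖s.ofLp.2‖ ≤ s.ofLp.1}

variable {H : Type*} [NormedAddCommGroup H] [InnerProductSpace ℝ H]

def normalCone (C : Set H) (x : H) : Set H :=
  {y | x ∈ C ∧ ∀ z ∈ C, ⟪y, z - x⟫ ≤ 0}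

def tangentCone (Ω : Set H) (z : H) : Set H :=
  {w | ∃ t : ℕ → ℝ, ∃ wk : ℕ → H, (∀ k, 0 < t k) ∧ Tendsto t atTop (𝓝 0) ∧
    Tendsto wk atTop (𝓝 w) ∧ ∀ k, z + t k • wk k ∈ Ω}

def regularNormalCone (Ω : Set H) (z : H) : Set H :=
  {v | z ∈ Ω ∧ ∀ ε > 0, ∀ᶠ w in 𝓝[Ω \ {z}] z, ⟪v, w - z⟫ ≤ ε * ‖w - z‖}

def limitingNormalCone (Ω : Set H) (z : H) : Set H :=
  {v | ∃ zk : ℕ → H, ∃ vk : ℕ → H, (∀ k, vk k ∈ regularNormalCone Ω (zk k)) ∧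
    Tendsto zk atTop (𝓝 z) ∧ Tendsto vk atTop (𝓝 v)}

variable {n m : ℕ}

/-- The constraint set `Γ = {x | Φ(x) ∈ Q}`. -/
def Gamma (Φ : EuclideanSpace ℝ (Fin n) → Em m) : Set (EuclideanSpace ℝ (Fin n)) :=
  {x | Φ x ∈ Q m}

/-- Metric subregularity constraint qualification with modulus `κ`. -/
def MSCQmod (Φ : EuclideanSpace ℝ (Fin n) → Em m) (xb : EuclideanSpace ℝ (Fin n)) (κ : ℝ) : Prop :=
  ∃ U ∈ 𝓝 xb, ∀ x ∈ U, infDist x (Gamma Φ) ≤ κ * infDist (Φ x) (Q m)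

def MSCQ (Φ : EuclideanSpace ℝ (Fin n) → Em m) (xb : EuclideanSpace ℝ (Fin n)) : Prop :=
  ∃ κ > 0, MSCQmod Φ xb κ

/-- Lagrange multiplier set `Λ(x,x*)`. -/
def Lambda (Φ : EuclideanSpace ℝ (Fin n) → Em m) (x xs : EuclideanSpace ℝ (Fin n)) : Set (Em m) :=
  {lam | lam ∈ normalCone (Q m) (Φ x) ∧ ContinuousLinearMap.adjoint (fderiv ℝ Φ x) lam = xs}

/-- Critical cone `K(x,x*) = T_Γ(x) ∩ {x*}^⊥`. -/
def Kcone (Φ : EuclideanSpace ℝ (Fin n) → Em m) (x xs : EuclideanSpace ℝ (Fin n)) :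
    Set (EuclideanSpace ℝ (Fin n)) :=
  tangentCone (Gamma Φ) x ∩ {v | ⟪xs, v⟫ = 0}

/-- `x ↦ Φ̂(x) = (−Φ₀(x), Φ_r(x))`. -/
def hatFun (Φ : EuclideanSpace ℝ (Fin n) → Em m) (x : EuclideanSpace ℝ (Fin n)) : Em m :=
  mk2 (-(Φ x).ofLp.1) (Φ x).ofLp.2

/-- Hessian of `x ↦ ⟨λ, Φ(x)⟩` at `x`, as a linear map (derivative of the gradient). -/
def hessLam (Φ : EuclideanSpace ℝ (Fin n) → Em m) (x : EuclideanSpace ℝ (Fin n)) (lam : Em m) :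
    EuclideanSpace ℝ (Fin n) →L[ℝ] EuclideanSpace ℝ (Fin n) :=
  fderiv ℝ (fun y => ContinuousLinearMap.adjoint (fderiv ℝ Φ y) lam) x

/-- The curvature term `H(x;λ)`. -/

def Hmap (Φ : EuclideanSpace ℝ (Fin n) → Em m) (x : EuclideanSpace ℝ (Fin n)) (lam : Em m) :
    EuclideanSpace ℝ (Fin n) →L[ℝ] EuclideanSpace ℝ (Fin n) :=
  if Φ x ∈ frontier (Q m) \ {0} then
    (-(lam.ofLp.1 / (Φ x).ofLp.1)) •
      ((ContinuousLinearMap.adjoint (fderiv ℝ (hatFun Φ) x)).comp (fderiv ℝ Φ x))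
  else 0

/-- `∇²⟨λ,Φ⟩(x) + H(x;λ)`. -/
def Gmap (Φ : EuclideanSpace ℝ (Fin n) → Em m) (x : EuclideanSpace ℝ (Fin n)) (lam : Em m) :
    EuclideanSpace ℝ (Fin n) →L[ℝ] EuclideanSpace ℝ (Fin n) :=
  hessLam Φ x lam + Hmap Φ x lam

/-- `Λ(x,x*;v)`: minimizers of `λ ↦ −⟨v, (∇²⟨λ,Φ⟩(x)+H(x;λ))v⟩` over `Λ(x,x*)`. -/
def LambdaV (Φ : EuclideanSpace ℝ (Fin n) → Em m) (x xs v : EuclideanSpace ℝ (Fin n)) :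
    Set (Em m) :=
  {lam ∈ Lambda Φ x xs | ∀ mu ∈ Lambda Φ x xs,
    -⟪v, Gmap Φ x lam v⟫ ≤ -⟪v, Gmap Φ x mu v⟫}

/-- Graph of the limiting normal cone mapping `N_Γ`, inside `ℝ^n × ℝ^n` with the ℓ² norm. -/
def gphNGamma (Φ : EuclideanSpace ℝ (Fin n) → Em m) :
    Set (WithLp 2 (EuclideanSpace ℝ (Fin n) × EuclideanSpace ℝ (Fin n))) :=
  {p | p.ofLp.2 ∈ limitingNormalCone (Gamma Φ) p.ofLp.1}

/-- Second derivative `D²Φ(x)[v,v]`. -/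
def D2 (Φ : EuclideanSpace ℝ (Fin n) → Em m) (x v : EuclideanSpace ℝ (Fin n)) : Em m :=
  fderiv ℝ (fderiv ℝ Φ) x v v

end SOC

namespace SOC

variable {H : Type*} [NormedAddCommGroup H] [InnerProductSpace ℝ H]

/-- `π` is the (Euclidean) metric projection onto `C`. -/
def IsProjOn (C : Set H) (π : H → H) : Prop :=
  ∀ x, π x ∈ C ∧ ∀ z ∈ C, ‖x - π x‖ ≤ ‖x - z‖

/-- Graph of the normal cone mapping `N_Ω`. -/
def gphN (Ω : Set H) : Set (WithLp 2 (H × H)) :=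
  {p | p.ofLp.2 ∈ normalCone Ω p.ofLp.1}

end SOC


namespace SOC

variable {H : Type*} [NormedAddCommGroup H] [InnerProductSpace ℝ H]

lemma aux_nearest_inner_le {C : Set H} (hC : Convex ℝ C) {v x : H} (hv : v ∈ C)
    (hmin : ∀ z ∈ C, ‖x - v‖ ≤ ‖x - z‖) : ∀ z ∈ C, ⟪x - v, z - v⟫ ≤ 0 := by
  have hne : Nonempty C := ⟨⟨v, hv⟩⟩
  have hbdd : BddBelow (Set.range fun w : C => ‖x - (w : H)‖) := by
    refine ⟨0, ?_⟩; rintro r ⟨w, rfl⟩; exact norm_nonneg _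
  have h : ‖x - v‖ = ⨅ w : C, ‖x - (w : H)‖ :=
    le_antisymm (le_ciInf fun w => hmin w w.2) (ciInf_le hbdd ⟨v, hv⟩)
  exact (norm_eq_iInf_iff_real_inner_le_zero hC hv).1 h

lemma aux_inner_le_nearest {C : Set H} {v x : H} (h : ∀ z ∈ C, ⟪x - v, z - v⟫ ≤ 0) :
    ∀ z ∈ C, ‖x - v‖ ≤ ‖x - z‖ := by
  intro z hz
  have e : x - z = (x - v) - (z - v) := by abel
  have h2 : ‖x - z‖^2 = ‖x - v‖^2 - 2*⟪x - v, z - v⟫ + ‖z - v‖^2 := by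
    rw [e, @norm_sub_sq_real]
  nlinarith [h z hz, norm_nonneg (x - z), norm_nonneg (x - v), sq_nonneg (‖z - v‖)]

lemma aux_nearest_unique {C : Set H} (hC : Convex ℝ C) {x v₁ v₂ : H} (h1 : v₁ ∈ C) (h2 : v₂ ∈ C)
    (m1 : ∀ z ∈ C, ‖x - v₁‖ ≤ ‖x - z‖) (m2 : ∀ z ∈ C, ‖x - v₂‖ ≤ ‖x - z‖) : v₁ = v₂ := by
  have i1 := aux_nearest_inner_le hC h1 m1 v₂ h2
  have i2 := aux_nearest_inner_le hC h2 m2 v₁ h1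
  have e1 : ⟪v₂ - v₁, v₂ - v₁⟫ = ⟪x - v₁, v₂ - v₁⟫ - ⟪x - v₂, v₂ - v₁⟫ := by
    rw [← inner_sub_left]; congr 1; abel
  have e2 : ⟪x - v₂, v₁ - v₂⟫ = - ⟪x - v₂, v₂ - v₁⟫ := by
    rw [show (v₁ - v₂ : H) = -(v₂ - v₁) by abel, inner_neg_right]
  have key : ⟪v₂ - v₁, v₂ - v₁⟫ ≤ 0 := by linarith
  have hz : ⟪v₂ - v₁, v₂ - v₁⟫ = 0 := le_antisymm key real_inner_self_nonneg
  have : v₂ - v₁ = 0 := (@inner_self_eq_zero ℝ _ _ _ _ _).mp hz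
  symm; exact sub_eq_zero.mp this

lemma aux_proj_lipschitz {C : Set H} (hC : Convex ℝ C) {π : H → H} (hπ : IsProjOn C π)
    (x y : H) : ‖π x - π y‖ ≤ ‖x - y‖ := by
  have i1 := aux_nearest_inner_le hC (hπ x).1 (hπ x).2 (π y) (hπ y).1
  have i2 := aux_nearest_inner_le hC (hπ y).1 (hπ y).2 (π x) (hπ x).1
  have key : ‖π x - π y‖^2 ≤ ⟪x - y, π x - π y⟫ := by
    have hn : ‖π x - π y‖^2 = ⟪π x - π y, π x - π y⟫ := (real_inner_self_eq_norm_sq _).symm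
    simp only [inner_sub_left, inner_sub_right] at i1 i2 ⊢
    rw [hn]
    simp only [inner_sub_left, inner_sub_right]
    linarith [real_inner_comm x (π x), real_inner_comm x (π y), real_inner_comm y (π x),
      real_inner_comm y (π y), real_inner_comm (π x) (π y), real_inner_comm x y]
  have cs := real_inner_le_norm (x - y) (π x - π y)
  nlinarith [norm_nonneg (π x - π y), norm_nonneg (x - y)]

def Dirs (Ω : Set H) (z : H) : Set H := {w | ∃ t : ℝ, 0 < t ∧ z + t • w ∈ Ω}

lemma aux_smallScale {Ω : Set H} (hΩ : Convex ℝ Ω) {z : H} (hz : z ∈ Ω) {w : H} {t₀ : ℝ}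
    (ht₀ : 0 < t₀) (hw : z + t₀ • w ∈ Ω) : ∀ s : ℝ, 0 < s → s ≤ t₀ → z + s • w ∈ Ω := by
  intro s hs hst
  have hmem := hΩ hz hw (a := 1 - s/t₀) (b := s/t₀)
    (by rw [sub_nonneg]; exact div_le_one_of_le₀ hst ht₀.le)
    (by positivity) (by ring)
  have e : (1 - s/t₀) • z + (s/t₀) • (z + t₀ • w) = z + s • w := by
    rw [smul_add, smul_smul, div_mul_cancel₀ _ ht₀.ne', sub_smul, one_smul]; abel
  rwa [e] at hmem

lemma aux_tendsto_inv_nat : Tendsto (fun k : ℕ => ((k : ℝ) + 1)⁻¹) atTop (𝓝 0) := by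
  simpa [one_div] using tendsto_one_div_add_atTop_nhds_zero_nat (𝕜 := ℝ)

lemma aux_tangent_eq {Ω : Set H} (hΩ : Convex ℝ Ω) {z : H} (hz : z ∈ Ω) :
    tangentCone Ω z = closure (Dirs Ω z) := by
  apply Set.Subset.antisymm
  · rintro w ⟨t, wk, hpos, _, hwk, hmem⟩
    exact mem_closure_of_tendsto hwk (Eventually.of_forall fun k => ⟨t k, hpos k, hmem k⟩)
  · intro w hw
    have hsel : ∀ k : ℕ, ∃ u, u ∈ Dirs Ω z ∧ dist w u < ((k : ℝ) + 1)⁻¹ := by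
      intro k
      exact Metric.mem_closure_iff.mp hw _ (by positivity)
    choose u hu hdist using hsel
    choose tf htf hmemf using hu
    refine ⟨fun k => min (tf k) ((k : ℝ) + 1)⁻¹, u, fun k => lt_min (htf k) (by positivity),
      ?_, ?_, ?_⟩
    · refine squeeze_zero (fun k => (lt_min (htf k) (by positivity)).le)
        (fun k => min_le_right _ _) aux_tendsto_inv_nat
    · rw [tendsto_iff_dist_tendsto_zero]
      refine squeeze_zero (fun k => dist_nonneg) (fun k => ?_) aux_tendsto_inv_nat
      rw [dist_comm]; exact (hdist k).le
    · intro k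
      exact aux_smallScale hΩ hz (htf k) (hmemf k) _ (lt_min (htf k) (by positivity))
        (min_le_left _ _)

lemma aux_dirs_convex {Ω : Set H} (hΩ : Convex ℝ Ω) {z : H} (hz : z ∈ Ω) :
    Convex ℝ (Dirs Ω z) := by
  rintro u ⟨t₁, ht₁, hu⟩ v ⟨t₂, ht₂, hv⟩ a b ha hb hab
  refine ⟨min t₁ t₂, lt_min ht₁ ht₂, ?_⟩
  set t := min t₁ t₂ with htdef
  have ht : 0 < t := lt_min ht₁ ht₂
  have hu' : z + t • u ∈ Ω := aux_smallScale hΩ hz ht₁ hu t ht (min_le_left _ _)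
  have hv' : z + t • v ∈ Ω := aux_smallScale hΩ hz ht₂ hv t ht (min_le_right _ _)
  have hmem := hΩ hu' hv' ha hb hab
  have hb' : b = 1 - a := by linarith
  subst hb'
  have e : a • (z + t • u) + (1 - a) • (z + t • v) = z + t • (a • u + (1 - a) • v) := by
    module
  rwa [e] at hmem

lemma aux_tangent_convex {Ω : Set H} (hΩ : Convex ℝ Ω) {z : H} (hz : z ∈ Ω) :
    Convex ℝ (tangentCone Ω z) := by
  rw [aux_tangent_eq hΩ hz]; exact (aux_dirs_convex hΩ hz).closure

lemma aux_tangent_closed {Ω : Set H} (hΩ : Convex ℝ Ω) {z : H} (hz : z ∈ Ω) :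
    IsClosed (tangentCone Ω z) := by
  rw [aux_tangent_eq hΩ hz]; exact isClosed_closure

lemma aux_zero_mem_tangent {Ω : Set H} {z : H} (hz : z ∈ Ω) : (0 : H) ∈ tangentCone Ω z :=
  ⟨fun k => ((k : ℝ) + 1)⁻¹, fun _ => 0, fun k => by positivity, aux_tendsto_inv_nat,
    tendsto_const_nhds, fun k => by simpa using hz⟩

lemma aux_exists_proj {n : ℕ} {C : Set (EuclideanSpace ℝ (Fin n))} (hcl : IsClosed C)
    (hne : C.Nonempty) : ∃ π : EuclideanSpace ℝ (Fin n) → EuclideanSpace ℝ (Fin n),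
      IsProjOn C π := by
  have hsel : ∀ x : EuclideanSpace ℝ (Fin n), ∃ y, y ∈ C ∧ infDist x C = dist x y := by
    intro x
    obtain ⟨y, hy, h⟩ := hcl.exists_infDist_eq_dist hne x
    exact ⟨y, hy, h⟩
  choose π hπ hd using hsel
  refine ⟨π, fun x => ⟨hπ x, fun z hz => ?_⟩⟩
  rw [← dist_eq_norm, ← hd x, ← dist_eq_norm]
  exact infDist_le_dist_of_mem hz

lemma aux_proj_of_mem_normalCone {Ω : Set H} (hΩ : Convex ℝ Ω) {π : H → H}
    (hπ : IsProjOn Ω π) {x y : H} (hy : y ∈ normalCone Ω x) : π (x + y) = x := by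
  refine aux_nearest_unique hΩ (hπ _).1 hy.1 (hπ _).2 (aux_inner_le_nearest ?_)
  intro z hz
  simpa using hy.2 z hz

lemma aux_sub_proj_mem {Ω : Set H} (hΩ : Convex ℝ Ω) {π : H → H} (hπ : IsProjOn Ω π)
    (p : H) : p - π p ∈ normalCone Ω (π p) :=
  ⟨(hπ p).1, aux_nearest_inner_le hΩ (hπ p).1 (hπ p).2⟩

end SOC

open SOC in
/-- Proposition 3.4: for a closed convex set `Ω` with everywhere directionally
differentiable projection, the projection derivation condition (PDC) holds at `x̄ ∈ Ω`
iff `DN_Ω(x̄,ȳ)(v) = N_{K(x̄,ȳ)}(v)` for all `ȳ ∈ N_Ω(x̄)` and all `v`. -/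
theorem pdc_iff_graphicalDerivative_eq_normalCone_of_criticalCone
    {n : ℕ} (Ω : Set (EuclideanSpace ℝ (Fin n)))
    (hne : Ω.Nonempty) (hcl : IsClosed Ω) (hconv : Convex ℝ Ω)
    (projΩ : EuclideanSpace ℝ (Fin n) → EuclideanSpace ℝ (Fin n))
    (hproj : IsProjOn Ω projΩ)
    (hdd : ∀ x h : EuclideanSpace ℝ (Fin n), ∃ L,
      Filter.Tendsto (fun t : ℝ => t⁻¹ • (projΩ (x + t • h) - projΩ x))
        (nhdsWithin 0 (Set.Ioi 0)) (nhds L))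
    (xb : EuclideanSpace ℝ (Fin n)) (hxb : xb ∈ Ω) :
    (∀ y ∈ normalCone Ω xb, ∀ h : EuclideanSpace ℝ (Fin n),
      ∀ πK : EuclideanSpace ℝ (Fin n) → EuclideanSpace ℝ (Fin n),
        IsProjOn (tangentCone Ω xb ∩ {u | ⟪y, u⟫ = 0}) πK →
        Filter.Tendsto (fun t : ℝ => t⁻¹ • (projΩ (xb + y + t • h) - projΩ (xb + y)))
          (nhdsWithin 0 (Set.Ioi 0)) (nhds (πK h)))
    ↔
    (∀ yb ∈ normalCone Ω xb, ∀ v : EuclideanSpace ℝ (Fin n),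
      {w | mk2 v w ∈ tangentCone (gphN Ω) (mk2 xb yb)} =
        normalCone (tangentCone Ω xb ∩ {u | ⟪yb, u⟫ = 0}) v) := by
  classical
  have hKconv : ∀ y : EuclideanSpace ℝ (Fin n),
      Convex ℝ (tangentCone Ω xb ∩ {u | ⟪y, u⟫ = 0}) := by
    intro y
    refine (aux_tangent_convex hconv hxb).inter ?_
    intro u hu v hv a b _ _ _
    simp only [Set.mem_setOf_eq] at hu hv ⊢
    have e : ⟪y, a • u + b • v⟫ = a * ⟪y, u⟫ + b * ⟪y, v⟫ := by
      rw [inner_add_right, real_inner_smul_right, real_inner_smul_right]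
    rw [e, hu, hv]; ring
  have hKcl : ∀ y : EuclideanSpace ℝ (Fin n),
      IsClosed (tangentCone Ω xb ∩ {u | ⟪y, u⟫ = 0}) := by
    intro y
    refine (aux_tangent_closed hconv hxb).inter ?_
    exact isClosed_eq (continuous_const.inner continuous_id) continuous_const
  have hKne : ∀ y : EuclideanSpace ℝ (Fin n),
      (tangentCone Ω xb ∩ {u | ⟪y, u⟫ = 0}).Nonempty := by
    intro y
    exact ⟨0, aux_zero_mem_tangent hxb, by simp⟩
  have htpos : ∀ k : ℕ, (0 : ℝ) < ((k : ℝ) + 1)⁻¹ := fun k => by positivity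
  have htw : Tendsto (fun k : ℕ => ((k : ℝ) + 1)⁻¹) atTop (𝓝[>] (0 : ℝ)) :=
    tendsto_nhdsWithin_iff.mpr ⟨aux_tendsto_inv_nat, Eventually.of_forall htpos⟩
  constructor
  · intro hPDC yb hyb v
    obtain ⟨πK, hπK⟩ := aux_exists_proj (hKcl yb) (hKne yb)
    have hprojxb : projΩ (xb + yb) = xb := aux_proj_of_mem_normalCone hconv hproj hyb
    ext w
    simp only [Set.mem_setOf_eq]
    constructor
    · rintro ⟨t, pk, hpos, ht0, hpk, hmem⟩
      have htw' : Tendsto t atTop (𝓝[>] (0 : ℝ)) :=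
        tendsto_nhdsWithin_iff.mpr ⟨ht0, Eventually.of_forall hpos⟩
      have hPDCvw : Tendsto
          (fun s : ℝ => s⁻¹ • (projΩ (xb + yb + s • (v + w)) - projΩ (xb + yb)))
          (𝓝[>] (0 : ℝ)) (𝓝 (πK (v + w))) := hPDC yb hyb (v + w) πK hπK
      rw [hprojxb] at hPDCvw
      set q : ℕ → EuclideanSpace ℝ (Fin n) :=
        fun k => (t k)⁻¹ • (projΩ (xb + yb + t k • (v + w)) - xb) with hqdef
      have hq1 : Tendsto q atTop (𝓝 (πK (v + w))) := hPDCvw.comp htw'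
      have hcomp := ((WithLp.prodContinuousLinearEquiv 2 ℝ (EuclideanSpace ℝ (Fin n))
        (EuclideanSpace ℝ (Fin n))).continuous.tendsto _).comp hpk
      have hvk : Tendsto (fun k => (pk k).ofLp.1) atTop (𝓝 v) := (continuous_fst.tendsto _).comp hcomp
      have hwk : Tendsto (fun k => (pk k).ofLp.2) atTop (𝓝 w) := (continuous_snd.tendsto _).comp hcomp
      have hproj_k : ∀ k, projΩ (xb + yb + t k • ((pk k).ofLp.1 + (pk k).ofLp.2))
          = xb + t k • (pk k).ofLp.1 := by
        intro k
        have hm : (yb + t k • (pk k).ofLp.2) ∈ normalCone Ω (xb + t k • (pk k).ofLp.1) := hmem k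
        have h2 := aux_proj_of_mem_normalCone hconv hproj hm
        rwa [show xb + t k • (pk k).ofLp.1 + (yb + t k • (pk k).ofLp.2)
            = xb + yb + t k • ((pk k).ofLp.1 + (pk k).ofLp.2) by rw [smul_add]; abel] at h2
      have hbound : ∀ k, ‖q k - (pk k).ofLp.1‖ ≤ ‖(v + w) - ((pk k).ofLp.1 + (pk k).ofLp.2)‖ := by
        intro k
        have e : q k - (pk k).ofLp.1 = (t k)⁻¹ • (projΩ (xb + yb + t k • (v + w))
            - projΩ (xb + yb + t k • ((pk k).ofLp.1 + (pk k).ofLp.2))) := by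
          rw [hproj_k k]
          conv_lhs => rw [show q k = (t k)⁻¹ • (projΩ (xb + yb + t k • (v + w)) - xb) from rfl,
            show (pk k).ofLp.1 = (t k)⁻¹ • (t k • (pk k).ofLp.1) from (inv_smul_smul₀ (hpos k).ne' _).symm]
          rw [← smul_sub]
          congr 1
          abel
        rw [e, norm_smul, norm_inv, Real.norm_of_nonneg (hpos k).le]
        have hL := aux_proj_lipschitz hconv hproj (xb + yb + t k • (v + w))
          (xb + yb + t k • ((pk k).ofLp.1 + (pk k).ofLp.2))
        have e2 : (xb + yb + t k • (v + w)) - (xb + yb + t k • ((pk k).ofLp.1 + (pk k).ofLp.2))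
            = t k • ((v + w) - ((pk k).ofLp.1 + (pk k).ofLp.2)) := by rw [smul_sub]; abel
        rw [e2, norm_smul, Real.norm_of_nonneg (hpos k).le] at hL
        calc (t k)⁻¹ * ‖projΩ (xb + yb + t k • (v + w))
              - projΩ (xb + yb + t k • ((pk k).ofLp.1 + (pk k).ofLp.2))‖
            ≤ (t k)⁻¹ * (t k * ‖(v + w) - ((pk k).ofLp.1 + (pk k).ofLp.2)‖) :=
              mul_le_mul_of_nonneg_left hL (inv_nonneg.mpr (hpos k).le)
          _ = ‖(v + w) - ((pk k).ofLp.1 + (pk k).ofLp.2)‖ := by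
              rw [← mul_assoc, inv_mul_cancel₀ (hpos k).ne', one_mul]
      have hgz : Tendsto (fun k => ‖(v + w) - ((pk k).ofLp.1 + (pk k).ofLp.2)‖) atTop (𝓝 0) := by
        have h0 : Tendsto (fun k => (v + w) - ((pk k).ofLp.1 + (pk k).ofLp.2)) atTop (𝓝 0) := by
          have := tendsto_const_nhds (x := v + w) (f := atTop (α := ℕ)) |>.sub (hvk.add hwk)
          simpa using this
        exact tendsto_zero_iff_norm_tendsto_zero.mp h0
      have hdiff : Tendsto (fun k => q k - (pk k).ofLp.1) atTop (𝓝 0) :=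
        squeeze_zero_norm hbound hgz
      have hq2 : Tendsto q atTop (𝓝 v) := by
        have hsum := hdiff.add hvk
        have h2 : (fun k => (q k - (pk k).ofLp.1) + (pk k).ofLp.1) = q := by
          funext k; abel
        rwa [h2, zero_add] at hsum
      have hveq : πK (v + w) = v := tendsto_nhds_unique hq1 hq2
      have hvmem : v ∈ tangentCone Ω xb ∩ {u | ⟪yb, u⟫ = 0} := hveq ▸ (hπK (v + w)).1
      refine ⟨hvmem, fun z hz => ?_⟩
      have hvi := aux_nearest_inner_le (hKconv yb) hvmem
        (fun z hz => hveq ▸ (hπK (v + w)).2 z hz) z hz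
      simpa [add_sub_cancel_left] using hvi
    · rintro ⟨hvK, hVI⟩
      have hnear : ∀ z ∈ tangentCone Ω xb ∩ {u | ⟪yb, u⟫ = 0},
          ‖(v + w) - v‖ ≤ ‖(v + w) - z‖ :=
        aux_inner_le_nearest (fun z hz => by simpa [add_sub_cancel_left] using hVI z hz)
      have hproj_eq : πK (v + w) = v :=
        aux_nearest_unique (hKconv yb) (hπK _).1 hvK (hπK _).2 hnear
      have hPDCvw := hPDC yb hyb (v + w) πK hπK
      rw [hprojxb, hproj_eq] at hPDCvw
      set vk : ℕ → EuclideanSpace ℝ (Fin n) := fun k =>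
        (((k : ℝ) + 1)⁻¹)⁻¹ • (projΩ (xb + yb + ((k : ℝ) + 1)⁻¹ • (v + w)) - xb) with hvkdef
      have hvk : Tendsto vk atTop (𝓝 v) := hPDCvw.comp htw
      have hwk : Tendsto (fun k => (v + w) - vk k) atTop (𝓝 w) := by
        have := tendsto_const_nhds (x := v + w) (f := atTop (α := ℕ)) |>.sub hvk
        simpa using this
      refine ⟨fun k => ((k : ℝ) + 1)⁻¹, fun k => mk2 (vk k) ((v + w) - vk k), htpos,
        aux_tendsto_inv_nat, ?_, ?_⟩
      · exact ((WithLp.prodContinuousLinearEquiv 2 ℝ (EuclideanSpace ℝ (Fin n))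
          (EuclideanSpace ℝ (Fin n))).symm.continuous.tendsto (v, w)).comp
          (hvk.prodMk_nhds hwk)
      · intro k
        have hPk : xb + ((k : ℝ) + 1)⁻¹ • vk k
            = projΩ (xb + yb + ((k : ℝ) + 1)⁻¹ • (v + w)) := by
          show xb + ((k : ℝ) + 1)⁻¹ • ((((k : ℝ) + 1)⁻¹)⁻¹
            • (projΩ (xb + yb + ((k : ℝ) + 1)⁻¹ • (v + w)) - xb)) = _
          rw [smul_inv_smul₀ (htpos k).ne']
          abel
        show (yb + ((k : ℝ) + 1)⁻¹ • ((v + w) - vk k))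
            ∈ normalCone Ω (xb + ((k : ℝ) + 1)⁻¹ • vk k)
        have hsub := aux_sub_proj_mem hconv hproj (xb + yb + ((k : ℝ) + 1)⁻¹ • (v + w))
        have e1 : (xb + yb + ((k : ℝ) + 1)⁻¹ • (v + w))
            - projΩ (xb + yb + ((k : ℝ) + 1)⁻¹ • (v + w))
            = yb + ((k : ℝ) + 1)⁻¹ • ((v + w) - vk k) := by
          rw [← hPk, smul_sub]; abel
        rw [e1] at hsub
        rwa [← hPk] at hsub
  · intro hDN y hy h πK hπK
    obtain ⟨L, hL⟩ := hdd (xb + y) h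
    have hprojxb : projΩ (xb + y) = xb := aux_proj_of_mem_normalCone hconv hproj hy
    have hL' : Tendsto (fun s : ℝ => s⁻¹ • (projΩ (xb + y + s • h) - xb)) (𝓝[>] (0 : ℝ))
        (𝓝 L) := by
      simpa only [hprojxb] using hL
    set vk : ℕ → EuclideanSpace ℝ (Fin n) := fun k =>
      (((k : ℝ) + 1)⁻¹)⁻¹ • (projΩ (xb + y + ((k : ℝ) + 1)⁻¹ • h) - xb) with hvkdef
    have hvk : Tendsto vk atTop (𝓝 L) := hL'.comp htw
    have hwk : Tendsto (fun k => h - vk k) atTop (𝓝 (h - L)) :=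
      tendsto_const_nhds.sub hvk
    have hmemT : mk2 L (h - L) ∈ tangentCone (gphN Ω) (mk2 xb y) := by
      refine ⟨fun k => ((k : ℝ) + 1)⁻¹, fun k => mk2 (vk k) (h - vk k), htpos,
        aux_tendsto_inv_nat, ?_, ?_⟩
      · exact ((WithLp.prodContinuousLinearEquiv 2 ℝ (EuclideanSpace ℝ (Fin n))
          (EuclideanSpace ℝ (Fin n))).symm.continuous.tendsto (L, h - L)).comp
          (hvk.prodMk_nhds hwk)
      · intro k
        have hPk : xb + ((k : ℝ) + 1)⁻¹ • vk k
            = projΩ (xb + y + ((k : ℝ) + 1)⁻¹ • h) := by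
          show xb + ((k : ℝ) + 1)⁻¹ • ((((k : ℝ) + 1)⁻¹)⁻¹
            • (projΩ (xb + y + ((k : ℝ) + 1)⁻¹ • h) - xb)) = _
          rw [smul_inv_smul₀ (htpos k).ne']
          abel
        show (y + ((k : ℝ) + 1)⁻¹ • (h - vk k))
            ∈ normalCone Ω (xb + ((k : ℝ) + 1)⁻¹ • vk k)
        have hsub := aux_sub_proj_mem hconv hproj (xb + y + ((k : ℝ) + 1)⁻¹ • h)
        have e1 : (xb + y + ((k : ℝ) + 1)⁻¹ • h) - projΩ (xb + y + ((k : ℝ) + 1)⁻¹ • h)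
            = y + ((k : ℝ) + 1)⁻¹ • (h - vk k) := by
          rw [← hPk, smul_sub]; abel
        rw [e1] at hsub
        rwa [← hPk] at hsub
    have hNC : h - L ∈ normalCone (tangentCone Ω xb ∩ {u | ⟪y, u⟫ = 0}) L := by
      rw [← hDN y hy L]
      exact hmemT
    obtain ⟨hLK, hVI⟩ := hNC
    have hproj_eq : πK h = L :=
      aux_nearest_unique (hKconv y) (hπK h).1 hLK (hπK h).2 (aux_inner_le_nearest hVI)
    rw [hproj_eq]
    exact hL
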